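/- Let Γ be a discrete subring of ℂ containing 1, let z ∈ ℂ' and let (a_n)_{n≥0} be a continued fraction expansion of z over Γ with iteration sequence (z_n), Q-pair (p_n), (q_n), and relative errors δ_n = q_n(q_n·z − p_n). Then for any n ≥ 1 with |q_{n−1}| ≤ |q_n| the following hold: (i) if |z_{n+1}| > 1 then |δ_n| ≤ (|z_{n+1}| − 1)^{−1}; (ii) |δ_{n−1}| ≤ |δ_n| + 1. -/

import Mathlib

/-- The quotient field of a subring `Γ` of `ℂ`, as a subset of `ℂ`. -/
def quotField (Γ : Subring ℂ) : Set ℂ :=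
  {x | ∃ p ∈ Γ, ∃ q ∈ Γ, q ≠ 0 ∧ x = p / q}

/-- `(a n)` is a continued fraction expansion of `z` over `Γ`, with iteration
sequence `(zs n)`: `zs 0 = z`, `0 < |zs n - a n| < 1` and `zs (n+1) = (zs n - a n)⁻¹`. -/
def IsCFE (Γ : Subring ℂ) (z : ℂ) (a zs : ℕ → ℂ) : Prop :=
  (∀ n, a n ∈ Γ) ∧ zs 0 = z ∧
    (∀ n, 0 < norm (zs n - a n) ∧ norm (zs n - a n) < 1) ∧
    (∀ n, zs (n + 1) = (zs n - a n)⁻¹)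

/-- The Q-pair of a sequence of partial quotients, with indices shifted by one:
`p (n+1)` is the paper's `p_n` and `q (n+1)` is the paper's `q_n`
(so `p 0 = p_{-1} = 1` and `q 0 = q_{-1} = 0`). -/
def IsQPair (a p q : ℕ → ℂ) : Prop :=
  p 0 = 1 ∧ p 1 = a 0 ∧ (∀ n, p (n + 2) = a (n + 1) * p (n + 1) + p n) ∧
  q 0 = 0 ∧ q 1 = 1 ∧ (∀ n, q (n + 2) = a (n + 1) * q (n + 1) + q n)


/-- The sequence of relative errors `δ_n = q_n (q_n z - p_n)` (index shifted by one
in `p`, `q`, so `relErr z p q n` is the paper's `δ_n`). -/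
def relErr (z : ℂ) (p q : ℕ → ℂ) (n : ℕ) : ℂ :=
  q (n + 1) * (q (n + 1) * z - p (n + 1))

/-- Proposition 2.4: for any `n ≥ 1` with `|q_{n-1}| ≤ |q_n|`:
(i) if `|z_{n+1}| > 1` then `|δ_n| ≤ (|z_{n+1}| - 1)⁻¹`; (ii) `|δ_{n-1}| ≤ |δ_n| + 1`.
(The paper's index `n ≥ 1` is `n + 1` below.) -/
theorem stmt_2 (Γ : Subring ℂ) (hdisc : DiscreteTopology Γ)
    (z : ℂ) (hz : z ∉ quotField Γ)
    (a zs p q : ℕ → ℂ) (hcf : IsCFE Γ z a zs) (hpq : IsQPair a p q) :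
    ∀ n : ℕ, norm (q (n + 1)) ≤ norm (q (n + 2)) →
      ((1 < norm (zs (n + 2)) →
          norm (relErr z p q (n + 1)) ≤ (norm (zs (n + 2)) - 1)⁻¹)
        ∧ norm (relErr z p q n) ≤ norm (relErr z p q (n + 1)) + 1) := by
  obtain ⟨haΓ, hz0, habs, hrec⟩ := hcf
  obtain ⟨hp0, hp1, hpr, hq0, hq1, hqr⟩ := hpq
  have hw : ∀ n, zs n - a n ≠ 0 := by
    intro n h
    have := (habs n).1
    rw [h] at this
    simp at this
  -- key identity 1: q_{n} z - p_{n} = -(zs n - a n) * (q_{n-1} z - p_{n-1})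
  have hE : ∀ n, q (n+1) * z - p (n+1) = -(zs n - a n) * (q n * z - p n) := by
    intro n
    induction n with
    | zero => rw [hp0, hp1, hq0, hq1, hz0]; ring
    | succ n ih =>
      have h2 : q n * z - p n = -(zs (n+1)) * (q (n+1) * z - p (n+1)) := by
        rw [ih, hrec n]
        field_simp [hw n]
      rw [hqr n, hpr n]
      linear_combination h2
  -- key identity 2: D recursion
  have hDrec : ∀ n, zs (n+2) * q (n+2) + q (n+1)
      = (zs (n+1) - a (n+1))⁻¹ * (zs (n+1) * q (n+1) + q n) := by
    intro n
    rw [hrec (n+1), hqr n]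
    field_simp [hw (n+1)]
    ring
  -- key identity 3: D_n * E_n = (-1)^n
  have hD : ∀ n, (zs (n+1) * q (n+1) + q n) * (q (n+1) * z - p (n+1)) = (-1)^n := by
    intro n
    induction n with
    | zero =>
      rw [hq0, hq1, hp1, hrec 0, hz0]
      field_simp [show z - a 0 ≠ 0 from hz0 ▸ hw 0]
      ring
    | succ n ih =>
      rw [hDrec n, hE (n+1)]
      have hc : (zs (n+1) - a (n+1))⁻¹ * (zs (n+1) - a (n+1)) = 1 :=
        inv_mul_cancel₀ (hw (n+1))
      calc (zs (n+1) - a (n+1))⁻¹ * (zs (n+1) * q (n+1) + q n) *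
            (-(zs (n+1) - a (n+1)) * (q (n+1) * z - p (n+1)))
          = -(((zs (n+1) - a (n+1))⁻¹ * (zs (n+1) - a (n+1))) *
              ((zs (n+1) * q (n+1) + q n) * (q (n+1) * z - p (n+1)))) := by ring
        _ = (-1)^(n+1) := by rw [hc, ih]; ring
  have hDne : ∀ n, zs (n+1) * q (n+1) + q n ≠ 0 := by
    intro n h
    have h0 : ((-1:ℂ))^n ≠ 0 := pow_ne_zero _ (by norm_num)
    exact h0 (by rw [← hD n, h, zero_mul])
  -- abs identity: |relErr n| * |D n| = |q (n+1)|
  have hAbs : ∀ n, norm (relErr z p q n) * norm (zs (n+1) * q (n+1) + q n)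
      = norm (q (n+1)) := by
    intro n
    have h : relErr z p q n * (zs (n+1) * q (n+1) + q n) = q (n+1) * (-1)^n := by
      unfold relErr
      calc q (n+1) * (q (n+1) * z - p (n+1)) * (zs (n+1) * q (n+1) + q n)
          = q (n+1) * ((zs (n+1) * q (n+1) + q n) * (q (n+1) * z - p (n+1))) := by ring
        _ = q (n+1) * (-1)^n := by rw [hD n]
    have := congrArg norm h
    rw [norm_mul, norm_mul] at this
    simpa using this
  intro n hqle
  have hq2ne : q (n+2) ≠ 0 := by
    intro hq2
    have hq1z : q (n+1) = 0 := by
      have h0 : norm (q (n+1)) ≤ 0 := by simpa [hq2] using hqle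
      exact norm_eq_zero.mp (le_antisymm h0 (norm_nonneg _))
    exact hDne (n+1) (by rw [hq2, hq1z]; ring)
  set A := norm (relErr z p q (n+1)) with hA
  set A' := norm (relErr z p q n) with hA'
  set DM := norm (zs (n+2) * q (n+2) + q (n+1)) with hDM
  set DN := norm (zs (n+1) * q (n+1) + q n) with hDN
  set Q := norm (q (n+2)) with hQ
  set Q' := norm (q (n+1)) with hQ'
  have e1 : A * DM = Q := hAbs (n+1)
  have e2 : A' * DN = Q' := hAbs n
  have hDMpos : 0 < DM := by
    rw [hDM]
    exact (norm_pos_iff).mpr (hDne (n+1))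
  have hQpos : 0 < Q := by
    rw [hQ]; exact norm_pos_iff.mpr hq2ne
  have hApos : 0 ≤ A := norm_nonneg _
  have hA'pos : 0 ≤ A' := norm_nonneg _
  -- |w| facts
  have habsz : norm (zs (n+2)) = (norm (zs (n+1) - a (n+1)))⁻¹ := by
    rw [hrec (n+1), norm_inv]
  have hwpos : 0 < norm (zs (n+1) - a (n+1)) := (habs (n+1)).1
  set W := norm (zs (n+1) - a (n+1)) with hW
  -- DN = W * DM
  have eDN : DN = W * DM := by
    have h : zs (n+1) * q (n+1) + q n = (zs (n+1) - a (n+1)) * (zs (n+2) * q (n+2) + q (n+1)) := by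
      rw [hDrec n]
      exact (mul_inv_cancel_left₀ (hw (n+1)) _).symm
    rw [hDN, h, norm_mul, ← hW, ← hDM]
  -- triangle: |zs(n+2) * q(n+2)| ≤ DM + Q'
  have etri : W⁻¹ * Q ≤ DM + Q' := by
    have h : zs (n+2) * q (n+2) = (zs (n+2) * q (n+2) + q (n+1)) - q (n+1) := by ring
    have h2 : norm (zs (n+2) * q (n+2)) ≤ DM + Q' := by
      rw [h]
      exact le_trans (norm_sub_le _ _) (by rw [hDM, hQ'])
    calc W⁻¹ * Q = norm (zs (n+2) * q (n+2)) := by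
          rw [norm_mul, ← habsz, hQ]
      _ ≤ DM + Q' := h2
  constructor
  · intro hgt
    set t := norm (zs (n+2)) with ht
    -- DM ≥ (t - 1) * Q
    have hb : (t - 1) * Q ≤ DM := by
      have h1 : t * Q - Q' ≤ DM := by
        have := norm_add_le (zs (n+2) * q (n+2) + q (n+1)) (q (n+1))
        have h2 : norm (zs (n+2) * q (n+2)) ≤ DM + Q' := by
          calc norm (zs (n+2) * q (n+2))
              = norm ((zs (n+2) * q (n+2) + q (n+1)) - q (n+1)) := by ring_nf
            _ ≤ DM + Q' := le_trans (norm_sub_le _ _) (by rw [hDM, hQ'])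
        rw [norm_mul, ← ht, ← hQ] at h2
        linarith
      have : Q' ≤ Q := hqle
      nlinarith
    rw [inv_eq_one_div, le_div_iff₀ (by linarith : (0:ℝ) < t - 1)]
    nlinarith [mul_le_mul_of_nonneg_left hb hApos]
  · have hQ'le : Q' ≤ Q := hqle
    have key : A' * (W * DM) = Q' := by rw [← eDN]; exact e2
    have hQle : Q ≤ W * DM + W * Q' := by
      have := mul_le_mul_of_nonneg_left etri (le_of_lt hwpos)
      have hc : W * (W⁻¹ * Q) = Q := by
        field_simp
      nlinarith
    nlinarith [mul_pos hwpos hDMpos, mul_le_mul_of_nonneg_left hQ'le (le_of_lt hwpos),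
      mul_le_mul_of_nonneg_left (mul_le_mul_of_nonneg_left hQ'le hApos) (le_of_lt hwpos)]
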